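/- Let G be a group and let H' ≤ H ≤ G be subgroups such that H' has finite index in H. If H' is separable in G, then H is separable in G. -/

import Mathlib

open scoped Pointwise

/-- A subgroup `H` of a group `G` is separable in `G` if for every `g ∈ G` with `g ∉ H`
there exists a finite-index subgroup `K` of `G` with `H ≤ K` and `g ∉ K`. -/
def SubgroupSeparable {G : Type*} [Group G] (H : Subgroup G) : Prop :=
  ∀ g : G, g ∉ H → ∃ K : Subgroup G, K.FiniteIndex ∧ H ≤ K ∧ g ∉ K

/-- If `H' ≤ H ≤ G`, `H'` has finite index in `H`, and `H'` is separable in `G`,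
then `H` is separable in `G`. -/
theorem separable_of_finiteIndex_subgroup {G : Type*} [Group G] (H' H : Subgroup G)
    (hle : H' ≤ H) (hfi : (H'.subgroupOf H).FiniteIndex)
    (hsep : SubgroupSeparable H') : SubgroupSeparable H := by
  intro g hg
  haveI := hfi
  haveI : Finite (H ⧸ H'.subgroupOf H) := Subgroup.finite_quotient_of_finiteIndex
  -- representatives
  set Q := H ⧸ H'.subgroupOf H
  let x : Q → G := fun q => (Quotient.out q : H)
  have hx : ∀ q : Q, (x q)⁻¹ * g ∉ H' := by
    intro q hmem
    exact hg (by simpa [x] using H.mul_mem (Quotient.out q : H).2 (hle hmem))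
  choose K hKfi hKle hKg using fun q => hsep ((x q)⁻¹ * g) (hx q)
  let N : Subgroup G := ⨅ q : Q, (K q).normalCore
  haveI : N.Normal := ⟨by
    intro a ha b
    simp only [N, Subgroup.mem_iInf] at ha ⊢
    exact fun q => ((K q).normalCore_normal).conj_mem a (ha q) b⟩
  haveI : N.FiniteIndex := Subgroup.finiteIndex_iInf fun q =>
    @Subgroup.finiteIndex_normalCore _ _ _ (hKfi q)
  refine ⟨H ⊔ N, Subgroup.finiteIndex_of_le le_sup_right, le_sup_left, ?_⟩
  intro hgK
  have : g ∈ (H : Set G) * (N : Set G) := by rw [← Subgroup.mul_normal]; exact_mod_cast hgK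
  obtain ⟨h, hh, n, hn, rfl⟩ := this
  set q : Q := QuotientGroup.mk ⟨h, hh⟩
  have hq : (x q)⁻¹ * h ∈ H' := by
    have := QuotientGroup.mk_out_eq_mul (H'.subgroupOf H) (⟨h, hh⟩ : H)
    obtain ⟨z, hz⟩ := this
    have : (Quotient.out q : H) = ⟨h, hh⟩ * (z : H) := hz
    have h2 : x q = h * ((z : H) : G) := by simp [x, this]
    have hz' : ((z : H) : G) ∈ H' := z.2
    rw [h2]
    simpa [mul_assoc] using H'.inv_mem hz'
  apply hKg q
  have h1 : (x q)⁻¹ * h ∈ K q := hKle q hq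
  have h2 : n ∈ K q := (Subgroup.normalCore_le _) (Subgroup.mem_iInf.mp hn q)
  simpa [mul_assoc] using (K q).mul_mem h1 h2
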